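/- If either π̄_D = π_D or μ̄₁Δ = μ₁Δ, then E[ (f̄(D|A=1)/π̄_D(D|A=1,X))·(Y₁ − Y₀ − μ̄₁Δ(X,D)) + m̄(D|A=1) | A=1, D=δ ] = E[μ₁Δ(X,δ) | A=1] for almost every δ. -/

import Mathlib

open MeasureTheory

/-- **Robustness of the dose component.**  In the setting of the dose-component identity
(at a fixed dose `δ`, with `ν` the conditional law of `X` given `A=1`, true conditional
density `πD` of `D` at `δ`, marginal `f = ∫ πD dν`, true trend
`μ x = μ₁Δ(x,δ) = E[Y₁-Y₀|A=1,D=δ,X=x]`, candidates `πbD, μb` with `fb = ∫ πbD dν`,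
`mb = ∫ μb dν`, and `νδ` the law of `X` given `A=1, D=δ`, which by Bayes' rule has density
`πD x / f` w.r.t. `ν`):  if either `π̄_D = π_D` or `μ̄₁Δ = μ₁Δ`, then
`E[(f̄(D|A=1)/π̄_D(D|A=1,X))(Y₁-Y₀-μ̄₁Δ(X,D)) + m̄(D|A=1) | A=1, D=δ]
  = E[μ₁Δ(X,δ) | A=1]`. -/
theorem dose_component_robustness
    {𝒳 : Type*} [MeasurableSpace 𝒳]
    (ν : Measure 𝒳) [IsProbabilityMeasure ν]
    (πD πbD μ μb : 𝒳 → ℝ) (f fb mb : ℝ) (ε : ℝ) (hε : 0 < ε)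
    (hπDpos : ∀ x, ε ≤ πD x) (hπbDpos : ∀ x, ε ≤ πbD x)
    (hπDmeas : Measurable πD) (hπbDmeas : Measurable πbD)
    (hμmeas : Measurable μ) (hμbmeas : Measurable μb)
    (hμbbd : ∃ C : ℝ, ∀ x, |μb x| ≤ C) (hπbDbd : ∃ C : ℝ, ∀ x, πbD x ≤ C)
    (hf : f = ∫ x, πD x ∂ν) (hfb : fb = ∫ x, πbD x ∂ν) (hmb : mb = ∫ x, μb x ∂ν)
    (hintμ : Integrable μ ν)
    -- either the dose density model or the treated outcome model is correct:
    (hcase : πbD = πD ∨ μb = μ) :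
    ∫ x, (fb / πbD x) * (μ x - μb x)
        ∂(ν.withDensity (fun x => ENNReal.ofReal (πD x / f))) + mb
      = ∫ x, μ x ∂ν := by
  have hintμb : Integrable μb ν := by
    obtain ⟨C, hC⟩ := hμbbd
    exact (integrable_const C).mono' hμbmeas.aestronglyMeasurable
      (Filter.Eventually.of_forall fun x => hC x)
  rcases hcase with hπ | hμeq
  · -- density correct
    subst hπ
    have hintπ : Integrable πbD ν := by
      obtain ⟨C, hC⟩ := hπbDbd
      exact (integrable_const C).mono' hπbDmeas.aestronglyMeasurable
        (Filter.Eventually.of_forall fun x =>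
          abs_le.mpr ⟨by linarith [hπbDpos x, hC x, hε], hC x⟩)
    have hfpos : 0 < f := by
      have : (ε : ℝ) = ∫ _x, ε ∂ν := by simp
      have hle : ∫ _x, (ε : ℝ) ∂ν ≤ ∫ x, πbD x ∂ν :=
        integral_mono (integrable_const ε) hintπ fun x => hπbDpos x
      rw [hf]; calc 0 < ε := hε
        _ = ∫ _x, (ε : ℝ) ∂ν := this
        _ ≤ _ := hle
    have key : ∫ x, (fb / πbD x) * (μ x - μb x)
        ∂(ν.withDensity (fun x => ENNReal.ofReal (πbD x / f)))
        = ∫ x, (πbD x / f) * ((fb / πbD x) * (μ x - μb x)) ∂ν := by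
      have hmw : Measurable fun x => (πbD x / f).toNNReal :=
        (hπbDmeas.div_const f).real_toNNReal
      rw [show (fun x => ENNReal.ofReal (πbD x / f)) =
          (fun x => ((πbD x / f).toNNReal : ENNReal)) from rfl,
        integral_withDensity_eq_integral_smul hmw]
      congr 1
      ext x
      have hnn : 0 ≤ πbD x / f := div_nonneg (le_trans hε.le (hπbDpos x)) hfpos.le
      simp [NNReal.smul_def, Real.coe_toNNReal _ hnn]
    have hpt : ∀ x, (πbD x / f) * ((fb / πbD x) * (μ x - μb x))
        = (fb / f) * (μ x - μb x) := by
      intro x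
      have hπx : πbD x ≠ 0 := ne_of_gt (lt_of_lt_of_le hε (hπbDpos x))
      field_simp
    rw [key]
    have hffb : fb = f := by rw [hf, hfb]
    simp only [hpt]
    simp only [hffb, div_self hfpos.ne', one_mul]
    rw [integral_sub hintμ hintμb, hmb]
    ring
  · simp only [hμeq, sub_self, mul_zero, integral_zero, zero_add, hmb]
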